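/- arXiv:2111.09911 — 2 statements merged into one kernel-verified Lean document; each statement's English description precedes it below -/
import Mathlib

section
/- Let k be a field, R = k[x_1, …, x_n] with n ≥ 1, and let 𝔞 ⊂ R be a monomial ideal. Suppose there exist positive real numbers a_1, …, a_n such that for every monomial x^u ∈ 𝔞 one has Σ_i a_i u_i > Σ_i a_i. Then the k-vector space dimension of R/𝔞 is at least (3^n + 1)/2 ≥ 3^n / 2. -/
open MvPolynomial

theorem stmt_2 (k : Type*) [Field k] (n : ℕ) (hn : 1 ≤ n)
    (I : Ideal (MvPolynomial (Fin n) k))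
    (hmono : ∃ S : Set (Fin n →₀ ℕ),
      I = Ideal.span ((fun u => MvPolynomial.monomial u (1 : k)) '' S))
    (w : Fin n → ℝ) (hw : ∀ i, 0 < w i)
    (hnewton : ∀ u : Fin n →₀ ℕ, MvPolynomial.monomial u (1 : k) ∈ I →
      (∑ i, w i) < ∑ i, w i * (u i : ℝ)) :
    ((3 : Cardinal) ^ n + 1) ≤ 2 * Module.rank k (MvPolynomial (Fin n) k ⧸ I) ∧
    ((3 : Cardinal) ^ n) ≤ 2 * Module.rank k (MvPolynomial (Fin n) k ⧸ I) := by
  classical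
  obtain ⟨S, hS⟩ := hmono
  -- embedding of {0,1,2}^n into exponent vectors
  set emb : (Fin n → Fin 3) → (Fin n →₀ ℕ) :=
    fun v => Finsupp.equivFunOnFinite.symm (fun i => (v i : ℕ)) with hemb
  have hembapp : ∀ v i, emb v i = (v i : ℕ) := fun v i => rfl
  have hembinj : Function.Injective emb := by
    intro a b hab
    funext i
    have h2 : (a i : ℕ) = (b i : ℕ) := by
      have := congrArg (fun f : Fin n →₀ ℕ => f i) hab
      simpa [hembapp] using this
    exact Fin.ext h2
  set W : ℝ := ∑ i, w i with hW
  set T : Finset (Fin n → Fin 3) :=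
    Finset.univ.filter (fun v => ∑ i, w i * ((v i : ℕ) : ℝ) ≤ W) with hT
  -- counting : 3^n + 1 ≤ 2 * T.card
  have hone : (fun _ => (1 : Fin 3)) ∈ T := by
    simp [hT, hW]
  set sig : (Fin n → Fin 3) → (Fin n → Fin 3) :=
    fun v i => (⟨2 - (v i : ℕ), by omega⟩ : Fin 3) with hsig
  have hsiginv : ∀ v, sig (sig v) = v := by
    intro v; funext i
    apply Fin.ext
    have := (v i).isLt
    simp [hsig]
    omega
  have hsigval : ∀ v, ∑ i, w i * (((sig v i : ℕ)) : ℝ) = 2 * W - ∑ i, w i * ((v i : ℕ) : ℝ) := by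
    intro v
    have : ∀ i, w i * (((sig v i : ℕ)) : ℝ) = 2 * w i - w i * ((v i : ℕ) : ℝ) := by
      intro i
      have h2 : (v i : ℕ) ≤ 2 := by have := (v i).isLt; omega
      have : (((2 - (v i : ℕ) : ℕ)) : ℝ) = 2 - ((v i : ℕ) : ℝ) := by
        push_cast [Nat.cast_sub h2]; ring
      simp only [hsig]
      rw [this]; ring
    rw [Finset.sum_congr rfl fun i _ => this i]
    rw [Finset.sum_sub_distrib, ← Finset.mul_sum, hW]
  set Tc : Finset (Fin n → Fin 3) :=
    Finset.univ.filter (fun v => ¬ (∑ i, w i * ((v i : ℕ) : ℝ) ≤ W)) with hTc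
  have hmap : ∀ v ∈ Tc, sig v ∈ T.erase (fun _ => (1 : Fin 3)) := by
    intro v hv
    rw [hTc, Finset.mem_filter] at hv
    push_neg at hv
    have hlt : ∑ i, w i * (((sig v i : ℕ)) : ℝ) < W := by
      rw [hsigval]; linarith [hv.2]
    refine Finset.mem_erase.mpr ⟨?_, ?_⟩
    · intro heq
      have : ∑ i, w i * (((sig v i : ℕ)) : ℝ) = W := by
        rw [heq]; simp [hW]
      linarith
    · rw [hT, Finset.mem_filter]
      exact ⟨Finset.mem_univ _, le_of_lt hlt⟩
  have hinjOn : Set.InjOn sig ↑Tc := by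
    intro a _ b _ hab
    have := congrArg sig hab
    rwa [hsiginv, hsiginv] at this
  have hcard1 : Tc.card ≤ (T.erase (fun _ => (1 : Fin 3))).card :=
    Finset.card_le_card_of_injOn sig hmap hinjOn
  have hcard2 : (T.erase (fun _ => (1 : Fin 3))).card + 1 = T.card :=
    Finset.card_erase_add_one hone
  have hcard3 : T.card + Tc.card = 3 ^ n := by
    have := Finset.card_filter_add_card_filter_not
      (s := (Finset.univ : Finset (Fin n → Fin 3)))
      (p := fun v => ∑ i, w i * ((v i : ℕ) : ℝ) ≤ W)
    rw [← hT, ← hTc] at this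
    simpa [Finset.card_univ] using this
  have hcount : 3 ^ n + 1 ≤ 2 * T.card := by omega
  -- linear independence of the corresponding monomials in the quotient
  have hli0 : LinearIndependent k (fun v : ↑T => (monomial (emb v.1) (1 : k))) := by
    have := (MvPolynomial.basisMonomials (Fin n) k).linearIndependent.comp
      (fun v : ↑T => emb v.1) (hembinj.comp Subtype.val_injective)
    simp only [MvPolynomial.coe_basisMonomials] at this
    exact this
  have hsuppall : ∀ q ∈ Submodule.span k (Set.range fun v : ↑T => monomial (emb v.1) (1 : k)),
      ∀ u ∈ q.support, ∃ v ∈ T, emb v = u := by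
    intro q hq
    induction hq using Submodule.span_induction with
      | mem x hx =>
        obtain ⟨v, rfl⟩ := hx
        intro u hu
        rw [MvPolynomial.support_monomial] at hu
        simp [one_ne_zero] at hu
        exact ⟨v.1, v.2, hu.symm⟩
      | zero => intro u hu; simp at hu
      | add x y _ _ hx hy =>
        intro u hu
        rcases Finset.mem_union.mp (MvPolynomial.support_add hu) with h | h
        · exact hx u h
        · exact hy u h
      | smul c x _ hx =>
        intro u hu
        exact hx u (MvPolynomial.support_smul hu)
  have hdisj : Disjoint
      (Submodule.span k (Set.range fun v : ↑T => monomial (emb v.1) (1 : k)))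
      (LinearMap.ker (Ideal.Quotient.mkₐ k I).toLinearMap) := by
    rw [Submodule.disjoint_def]
    intro p hp hker
    have hpI : p ∈ I := by
      have h0 := LinearMap.mem_ker.mp hker
      rw [AlgHom.toLinearMap_apply, Ideal.Quotient.mkₐ_eq_mk] at h0
      exact (Ideal.Quotient.eq_zero_iff_mem).mp h0
    have hsupp := hsuppall p hp
    -- if p ≠ 0, contradiction via Newton polyhedron hypothesis
    by_contra hp0
    obtain ⟨u, hu⟩ := (MvPolynomial.support_nonempty.mpr hp0)
    obtain ⟨v, hvT, rfl⟩ := hsupp u hu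
    have hmem : MvPolynomial.monomial (emb v) (1 : k) ∈ I := by
      rw [hS] at hpI ⊢
      obtain ⟨s, hsS, hsle⟩ := (MvPolynomial.mem_ideal_span_monomial_image.mp hpI) _ hu
      apply MvPolynomial.mem_ideal_span_monomial_image.mpr
      intro xi hxi
      rw [MvPolynomial.support_monomial] at hxi
      simp [one_ne_zero] at hxi
      subst hxi
      exact ⟨s, hsS, hsle⟩
    have hlt := hnewton _ hmem
    rw [hT, Finset.mem_filter] at hvT
    have : ∑ i, w i * ((emb v i : ℕ) : ℝ) ≤ W := by
      simpa [hembapp] using hvT.2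
    rw [hW] at hlt
    linarith
  have hli : LinearIndependent k
      (fun v : ↑T => (Ideal.Quotient.mkₐ k I).toLinearMap (monomial (emb v.1) (1 : k))) :=
    hli0.map hdisj
  have hrank : (T.card : Cardinal) ≤ Module.rank k (MvPolynomial (Fin n) k ⧸ I) := by
    have h := hli.cardinal_lift_le_rank
    rw [Cardinal.mk_coe_finset] at h
    simpa using h
  have hmain : ((3 : Cardinal) ^ n + 1) ≤ 2 * Module.rank k (MvPolynomial (Fin n) k ⧸ I) := by
    calc ((3 : Cardinal) ^ n + 1) = ((3 ^ n + 1 : ℕ) : Cardinal) := by push_cast; ring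
    _ ≤ ((2 * T.card : ℕ) : Cardinal) := by exact_mod_cast hcount
    _ = 2 * (T.card : Cardinal) := by push_cast; ring
    _ ≤ 2 * Module.rank k (MvPolynomial (Fin n) k ⧸ I) := mul_le_mul_right hrank 2
  exact ⟨hmain, le_trans (self_le_add_right _ 1) hmain⟩
end

section
/- Let k be a field of characteristic ≠ 2 and let R = k[x, y, z]/(xy − z²). Let 𝔭 = (y, z)·R, the prime ideal of the line L = {y = z = 0} on the quadric cone X = Spec R. Then in the localization R_𝔭 (a discrete valuation ring), the element y has valuation 2, while y generates an ideal of order 1 in the local ring at the vertex, i.e., y ∈ 𝔪 ∖ 𝔪² for 𝔪 = (x, y, z)·R. -/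
open MvPolynomial in
private lemma stmt9_sub_aeval_mem {k : Type*} [Field k] (q : MvPolynomial (Fin 3) k) :
    q - aeval ![X 0, 0, 0] q ∈ Ideal.span {(X 1 : MvPolynomial (Fin 3) k), X 2} := by
  induction q using MvPolynomial.induction_on with
  | C a => simp
  | add p q hp hq =>
      have : p + q - aeval ![X 0, 0, 0] (p + q)
          = (p - aeval ![X 0, 0, 0] p) + (q - aeval ![X 0, 0, 0] q) := by
        rw [map_add]; ring
      rw [this]; exact Ideal.add_mem _ hp hq
  | mul_X p i hp =>
      fin_cases i
      · show p * X 0 - aeval ![X 0, 0, 0] (p * X 0) ∈ _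
        have h0 : aeval ![(X 0 : MvPolynomial (Fin 3) k), 0, 0] (p * X 0)
            = aeval ![X 0, 0, 0] p * X 0 := by simp
        rw [h0, ← sub_mul]
        exact Ideal.mul_mem_right _ _ hp
      · show p * X 1 - aeval ![X 0, 0, 0] (p * X 1) ∈ _
        have h1 : aeval ![(X 0 : MvPolynomial (Fin 3) k), 0, 0] (p * X 1) = 0 := by simp
        rw [h1, sub_zero]
        exact Ideal.mul_mem_left _ _ (Ideal.subset_span (by simp))
      · show p * X 2 - aeval ![X 0, 0, 0] (p * X 2) ∈ _
        have h2 : aeval ![(X 0 : MvPolynomial (Fin 3) k), 0, 0] (p * X 2) = 0 := by simp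
        rw [h2, sub_zero]
        exact Ideal.mul_mem_left _ _ (Ideal.subset_span (by simp))

open MvPolynomial in
private lemma stmt9_mem_span_of_aeval_eq_zero {k : Type*} [Field k]
    {q : MvPolynomial (Fin 3) k}
    (h : aeval ![Polynomial.X, 0, 0] q = (0 : Polynomial k)) :
    q ∈ Ideal.span {(X 1 : MvPolynomial (Fin 3) k), X 2} := by
  have key : (Polynomial.aeval (R := k) (X 0 : MvPolynomial (Fin 3) k)).comp
      (MvPolynomial.aeval ![Polynomial.X, 0, 0])
      = MvPolynomial.aeval (![X 0, 0, 0] : Fin 3 → MvPolynomial (Fin 3) k) := by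
    apply MvPolynomial.algHom_ext
    intro i; fin_cases i <;> simp
  have h2 : MvPolynomial.aeval (![X 0, 0, 0] : Fin 3 → MvPolynomial (Fin 3) k) q = 0 := by
    rw [← key]
    simp [h]
  have h3 := stmt9_sub_aeval_mem (k := k) q
  rwa [h2, sub_zero] at h3

open MvPolynomial in
private lemma stmt9_lift {k : Type*} [Field k] {R : Type*} [CommRing R]
    (π : MvPolynomial (Fin 3) k →+* R) (hπ : Function.Surjective π)
    (hker : RingHom.ker π = Ideal.span {X 0 * X 1 - (X 2 : MvPolynomial (Fin 3) k) ^ 2})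
    {T : Type*} [CommRing T] (g : MvPolynomial (Fin 3) k →+* T)
    (hgf : g (X 0 * X 1 - (X 2 : MvPolynomial (Fin 3) k) ^ 2) = 0) :
    ∃ Ψ : R →+* T, ∀ q, Ψ (π q) = g q := by
  have hle : RingHom.ker π ≤ RingHom.ker g := by
    rw [hker, Ideal.span_le]
    intro a ha
    rw [Set.mem_singleton_iff] at ha
    subst ha
    simpa [RingHom.mem_ker] using hgf
  refine ⟨(Ideal.Quotient.lift (RingHom.ker π) g
      (fun a ha => RingHom.mem_ker.mp (hle ha))).comp
      (RingHom.quotientKerEquivOfSurjective hπ).symm.toRingHom, fun q => ?_⟩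
  have he : (RingHom.quotientKerEquivOfSurjective hπ) (Ideal.Quotient.mk _ q) = π q := by
    simp [RingHom.quotientKerEquivOfSurjective,
      RingHom.quotientKerEquivOfRightInverse.apply]
  have hsymm : (RingHom.quotientKerEquivOfSurjective hπ).symm (π q)
      = Ideal.Quotient.mk _ q := by
    rw [← he, RingEquiv.symm_apply_apply]
  simp [hsymm]

open MvPolynomial in
theorem stmt_9 (k : Type*) [Field k] (hchar : (2 : k) ≠ 0) :
    ∀ (R : Type _) (_ : CommRing R) (π : MvPolynomial (Fin 3) k →+* R)
      (hπ : Function.Surjective π)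
      (hker : RingHom.ker π = Ideal.span {X 0 * X 1 - (X 2 : MvPolynomial (Fin 3) k) ^ 2}),
      let y : R := π (X 1)
      let p : Ideal R := Ideal.span {π (X 1), π (X 2)}
      let m : Ideal R := Ideal.span {π (X 0), π (X 1), π (X 2)}
      -- 𝔭 is prime, and in the localization R_𝔭 the element y has valuation 2,
      -- expressed as: y lies in 𝔭²R_𝔭 but not in 𝔭³R_𝔭, i.e. some s ∉ 𝔭 has s*y ∈ 𝔭²,
      -- and no s ∉ 𝔭 has s*y ∈ 𝔭³; while y ∈ 𝔪 ∖ 𝔪².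
      p.IsPrime ∧
      (∃ s : R, s ∉ p ∧ s * y ∈ p ^ 2) ∧
      (∀ s : R, s ∉ p → s * y ∉ p ^ 3) ∧
      y ∈ m ∧ y ∉ m ^ 2 := by
  intro R _ π hπ hker y p m
  -- the defining relation
  have hfker : (X 0 * X 1 - (X 2 : MvPolynomial (Fin 3) k) ^ 2) ∈ RingHom.ker π := by
    rw [hker]; exact Ideal.subset_span rfl
  -- the map φ : R → k[x] detecting p (x ↦ x, y ↦ 0, z ↦ 0)
  obtain ⟨φ, hφ⟩ := stmt9_lift (k := k) π hπ hker (T := Polynomial k)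
    (MvPolynomial.aeval (![Polynomial.X, 0, 0] : Fin 3 → Polynomial k)).toRingHom
    (by simp)
  have hpker : RingHom.ker φ = p := by
    apply le_antisymm
    · intro r hr
      obtain ⟨q, rfl⟩ := hπ r
      rw [RingHom.mem_ker, hφ] at hr
      have hq := stmt9_mem_span_of_aeval_eq_zero (k := k) hr
      have h2 : π q ∈ Ideal.map π (Ideal.span {(X 1 : MvPolynomial (Fin 3) k), X 2}) :=
        Ideal.mem_map_of_mem π hq
      rwa [Ideal.map_span, Set.image_insert_eq, Set.image_singleton] at h2
    · rw [Ideal.span_le]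
      intro r hr
      simp only [Set.mem_insert_iff, Set.mem_singleton_iff] at hr
      rcases hr with rfl | rfl <;>
        · rw [SetLike.mem_coe, RingHom.mem_ker, hφ]; simp
  refine ⟨hpker ▸ RingHom.ker_isPrime φ, ⟨π (X 0), ?_, ?_⟩, ?_, ?_, ?_⟩
  · -- x ∉ p
    intro hmem
    rw [← hpker, RingHom.mem_ker, hφ] at hmem
    simp at hmem
  · -- x * y ∈ p²
    show π (X 0) * π (X 1) ∈ p ^ 2
    have hrel : π (X 0) * π (X 1) = π (X 2) ^ 2 := by
      rw [← map_mul, ← map_pow, ← sub_eq_zero, ← map_sub, ← RingHom.mem_ker]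
      exact hfker
    rw [hrel]
    exact Ideal.pow_mem_pow (Ideal.subset_span (by simp)) 2
  · -- ∀ s ∉ p, s * y ∉ p³
    intro s hs hsy
    obtain ⟨ψ, hψ⟩ := stmt9_lift (k := k) π hπ hker (T := Polynomial (Polynomial k))
      (MvPolynomial.aeval (![Polynomial.C (Polynomial.X ^ 2),
        Polynomial.X ^ 2, Polynomial.C Polynomial.X * Polynomial.X] :
        Fin 3 → Polynomial (Polynomial k))).toRingHom
      (by simp; ring)
    have hpmap : Ideal.map ψ p ≤ Ideal.span {(Polynomial.X : Polynomial (Polynomial k))} := by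
      rw [Ideal.map_span, Ideal.span_le]
      rintro b ⟨a, ha, rfl⟩
      simp only [Set.mem_insert_iff, Set.mem_singleton_iff] at ha
      rcases ha with rfl | rfl
      · rw [hψ]
        have h1 : ((MvPolynomial.aeval (R := k) (![Polynomial.C (Polynomial.X ^ 2),
            Polynomial.X ^ 2, Polynomial.C Polynomial.X * Polynomial.X] :
            Fin 3 → Polynomial (Polynomial k))).toRingHom (X 1))
            = Polynomial.X * Polynomial.X := by simp [sq]
        rw [h1]
        exact Ideal.mul_mem_left _ _ (Ideal.subset_span rfl)
      · rw [hψ]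
        have h2 : ((MvPolynomial.aeval (R := k) (![Polynomial.C (Polynomial.X ^ 2),
            Polynomial.X ^ 2, Polynomial.C Polynomial.X * Polynomial.X] :
            Fin 3 → Polynomial (Polynomial k))).toRingHom (X 2))
            = Polynomial.C Polynomial.X * Polynomial.X := by simp
        rw [h2]
        exact Ideal.mul_mem_left _ _ (Ideal.subset_span rfl)
    have h3 : ψ (s * y) ∈ Ideal.span {(Polynomial.X : Polynomial (Polynomial k))} ^ 3 := by
      have h1 : ψ (s * y) ∈ Ideal.map ψ (p ^ 3) := Ideal.mem_map_of_mem ψ hsy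
      rw [Ideal.map_pow] at h1
      exact Ideal.pow_right_mono hpmap 3 h1
    rw [Ideal.span_singleton_pow] at h3
    obtain ⟨g, hg⟩ := Ideal.mem_span_singleton'.mp h3
    have hψy : ψ y = Polynomial.X ^ 2 := by
      show ψ (π (X 1)) = _
      rw [hψ]; simp
    have hsy' : ψ s * Polynomial.X ^ 2 = g * Polynomial.X * Polynomial.X ^ 2 := by
      have h4 : g * Polynomial.X ^ 3 = ψ s * Polynomial.X ^ 2 := by
        rw [hg, map_mul, hψy]
      rw [← h4]; ring
    have hc : ψ s = g * Polynomial.X :=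
      mul_right_cancel₀ (pow_ne_zero 2 Polynomial.X_ne_zero) hsy'
    obtain ⟨q, rfl⟩ := hπ s
    have key2 : (Polynomial.evalRingHom (0 : Polynomial k)).comp
        (MvPolynomial.aeval (R := k) (![Polynomial.C (Polynomial.X ^ 2),
          Polynomial.X ^ 2, Polynomial.C Polynomial.X * Polynomial.X] :
          Fin 3 → Polynomial (Polynomial k))).toRingHom
        = (Polynomial.aeval (R := k) ((Polynomial.X : Polynomial k) ^ 2)).toRingHom.comp
          (MvPolynomial.aeval (R := k) (![Polynomial.X, 0, 0] : Fin 3 → Polynomial k)).toRingHom := by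
      apply MvPolynomial.ringHom_ext
      · intro a; simp
      · intro i; fin_cases i <;> simp
    have he0 : Polynomial.evalRingHom (0 : Polynomial k) (ψ (π q)) = 0 := by
      rw [hc]; simp
    rw [hψ] at he0
    have he1 := RingHom.congr_fun key2 q
    simp only [RingHom.coe_comp, Function.comp_apply] at he1
    rw [he1] at he0
    -- he0 : aeval (X^2) (aeval ![X,0,0] q) = 0
    have hcomp : (MvPolynomial.aeval (R := k) (![Polynomial.X, 0, 0] : Fin 3 → Polynomial k) q).comp
        ((Polynomial.X : Polynomial k) ^ 2) = 0 := by
      rw [Polynomial.comp, ← Polynomial.algebraMap_eq, ← Polynomial.aeval_def]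
      exact he0
    rcases Polynomial.comp_eq_zero_iff.mp hcomp with h0 | ⟨_, hX2⟩
    · apply hs
      rw [← hpker, RingHom.mem_ker, hφ]
      exact h0
    · have h22 : ((Polynomial.X : Polynomial k) ^ 2).coeff 2 = 0 := by
        rw [hX2]; simp
      simp [Polynomial.coeff_X_pow] at h22
  · -- y ∈ m
    exact Ideal.subset_span (Set.mem_insert_of_mem _ (Set.mem_insert _ _))
  · -- y ∉ m²
    intro hy
    obtain ⟨δ, hδ⟩ := stmt9_lift (k := k) π hπ hker (T := DualNumber k)
      (MvPolynomial.aeval (![0, DualNumber.eps, 0] : Fin 3 → DualNumber k)).toRingHom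
      (by simp)
    have hmmap : Ideal.map δ m ≤ Ideal.span {(DualNumber.eps : DualNumber k)} := by
      rw [Ideal.map_span, Ideal.span_le]
      rintro b ⟨a, ha, rfl⟩
      simp only [Set.mem_insert_iff, Set.mem_singleton_iff] at ha
      rcases ha with rfl | rfl | rfl
      · rw [hδ]
        have h0 : ((MvPolynomial.aeval (R := k) (![0, DualNumber.eps, 0] :
            Fin 3 → DualNumber k)).toRingHom (X 0)) = 0 := by simp
        rw [h0]; exact Ideal.zero_mem _
      · rw [hδ]
        have h1 : ((MvPolynomial.aeval (R := k) (![0, DualNumber.eps, 0] :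
            Fin 3 → DualNumber k)).toRingHom (X 1)) = DualNumber.eps := by simp
        rw [h1]; exact Ideal.subset_span rfl
      · rw [hδ]
        have h2 : ((MvPolynomial.aeval (R := k) (![0, DualNumber.eps, 0] :
            Fin 3 → DualNumber k)).toRingHom (X 2)) = 0 := by simp
        rw [h2]; exact Ideal.zero_mem _
    have h2 : δ y ∈ Ideal.span {(DualNumber.eps : DualNumber k)} ^ 2 := by
      have h1 : δ y ∈ Ideal.map δ (m ^ 2) := Ideal.mem_map_of_mem δ hy
      rw [Ideal.map_pow] at h1
      exact Ideal.pow_right_mono hmmap 2 h1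
    rw [Ideal.span_singleton_pow] at h2
    obtain ⟨g, hg⟩ := Ideal.mem_span_singleton'.mp h2
    have hδy : δ y = DualNumber.eps := by
      show δ (π (X 1)) = _
      rw [hδ]; simp
    have heps2 : (DualNumber.eps : DualNumber k) ^ 2 = 0 := by
      rw [sq]; exact DualNumber.eps_mul_eps
    rw [hδy, heps2, mul_zero] at hg
    have : (DualNumber.eps : DualNumber k).snd = 0 := by rw [← hg]; simp
    rw [DualNumber.snd_eps] at this
    exact one_ne_zero this
end
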